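/- Cartesian-tree matching is substring-consistent: if X ≈ct Y for equal-length strings X and Y, then X[i..j] ≈ct Y[i..j] holds for all 1 ≤ i ≤ j ≤ |X|. -/

import Mathlib

/-- `sub S i j` is the substring `S[i..j]` (1-indexed, inclusive). -/
def sub {α : Type*} (S : List α) (i j : ℕ) : List α :=
  (S.drop (i - 1)).take (j - i + 1)

/-- unlabeled ordered binary trees -/
inductive BT : Type
  | leaf : BT
  | node : BT → BT → BT
deriving DecidableEq

/-- Cartesian tree, computed with a fuel argument (fuel `≥` length suffices). -/
def ctAux {α : Type*} [LinearOrder α] : ℕ → List α → BT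
  | 0, _ => .leaf
  | _, [] => .leaf
  | n + 1, x :: xs =>
    let l := x :: xs
    let i := l.idxOf (xs.foldl min x)   -- leftmost position of the minimum
    .node (ctAux n (l.take i)) (ctAux n (l.drop (i + 1)))

/-- the Cartesian tree `CT(l)` of a string `l`. -/
def ctree {α : Type*} [LinearOrder α] (l : List α) : BT :=
  ctAux l.length l

namespace CTHelp
variable {α : Type*} [LinearOrder α]

lemma foldl_min_le_init (xs : List α) (x : α) : xs.foldl min x ≤ x := by
  induction xs generalizing x with
  | nil => exact le_refl x
  | cons y ys ih => exact le_trans (ih (min x y)) (min_le_left x y)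

lemma foldl_min_le (xs : List α) (x : α) {a : α} (ha : a ∈ xs) : xs.foldl min x ≤ a := by
  induction xs generalizing x with
  | nil => cases ha
  | cons y ys ih =>
    rcases List.mem_cons.1 ha with rfl | h
    · exact le_trans (foldl_min_le_init ys (min x a)) (min_le_right x a)
    · exact ih (min x y) h

lemma foldl_min_le_mem (xs : List α) (x : α) {a : α} (ha : a ∈ x :: xs) :
    xs.foldl min x ≤ a := by
  rcases List.mem_cons.1 ha with rfl | h
  · exact foldl_min_le_init xs a
  · exact foldl_min_le xs x h

lemma foldl_min_mem (xs : List α) (x : α) : xs.foldl min x ∈ x :: xs := by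
  induction xs generalizing x with
  | nil => simp
  | cons y ys ih =>
    have := ih (min x y)
    rcases List.mem_cons.1 this with h | h
    · rcases min_choice x y with h' | h'
      · rw [List.foldl_cons, h, h']; simp
      · rw [List.foldl_cons, h, h']; simp
    · simp [List.foldl_cons, List.mem_cons.2 (Or.inr h)]

lemma indexOf_le_of_getElem (l : List α) (a : α) (t : ℕ) (ht : t < l.length)
    (h : l[t] = a) : l.idxOf a ≤ t := by
  induction l generalizing t with
  | nil => simp at ht
  | cons b bs ih =>
    by_cases hb : b = a
    · simp [List.idxOf_cons, hb]
    · cases t with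
      | zero => simp at h; exact absurd h hb
      | succ s =>
        have := ih s (by simpa using ht) (by simpa using h)
        simp only [List.idxOf_cons, cond_eq_if, beq_iff_eq, hb, if_false]
        omega

/-- leftmost-minimum index; 0 for the empty list -/
def midx : List α → ℕ
  | [] => 0
  | x :: xs => (x :: xs).idxOf (xs.foldl min x)

lemma midx_lt (l : List α) (h : l ≠ []) : midx l < l.length := by
  match l with
  | x :: xs => exact List.idxOf_lt_length_iff.2 (foldl_min_mem xs x)

lemma midx_getElem (x : α) (xs : List α) :
    (x :: xs)[midx (x :: xs)]'(midx_lt _ (by simp)) = xs.foldl min x :=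
  List.getElem_idxOf _

lemma midx_le (l : List α) (h : l ≠ []) (t : ℕ) (ht : t < l.length) :
    l[midx l]'(midx_lt l h) ≤ l[t] := by
  match l with
  | x :: xs =>
    rw [midx_getElem]
    exact foldl_min_le_mem xs x (List.getElem_mem _)

lemma midx_first (l : List α) (h : l ≠ []) (t : ℕ) (ht : t < midx l) :
    l[midx l]'(midx_lt l h) < l[t]'(lt_trans ht (midx_lt l h)) := by
  match l with
  | x :: xs =>
    have hlt := lt_trans ht (midx_lt (x::xs) (by simp))
    refine lt_of_le_of_ne (midx_le _ (by simp) t hlt) ?_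
    intro heq
    have : (x::xs).idxOf (xs.foldl min x) ≤ t := by
      apply indexOf_le_of_getElem _ _ t hlt
      rw [← heq, midx_getElem]
    simp only [midx] at ht
    omega

lemma midx_unique (l : List α) (h : l ≠ []) (k : ℕ) (hk : k < l.length)
    (hle : ∀ t (ht : t < l.length), l[k] ≤ l[t])
    (hlt : ∀ t (ht : t < l.length), t < k → l[k] < l[t]) : midx l = k := by
  rcases lt_trichotomy (midx l) k with h1 | h1 | h1
  · exact absurd (midx_le l h k hk) (not_le.2 (hlt _ (midx_lt l h) h1))
  · exact h1
  · exact absurd (hle _ (midx_lt l h)) (not_le.2 (midx_first l h k h1))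

lemma fuel (n : ℕ) : ∀ l : List α, l.length ≤ n → ctAux n l = ctree l := by
  induction n using Nat.strong_induction_on with
  | _ n ih =>
    intro l hl
    match n, l with
    | 0, [] => rfl
    | 0, x :: xs => simp at hl
    | n+1, [] => rfl
    | n+1, x :: xs =>
      have hm := midx_lt (x :: xs) (by simp)
      simp only [midx] at hm
      show BT.node _ _ = ctree (x :: xs)
      have hlen : (x::xs).length = xs.length + 1 := rfl
      unfold ctree
      rw [hlen]
      show _ = BT.node _ _
      have hxn : xs.length ≤ n := by simp at hl; omega
      have h1 : ∀ k, xs.length ≤ k → k ≤ n → ctAux k ((x::xs).take ((x::xs).idxOf (xs.foldl min x)))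
          = ctree ((x::xs).take ((x::xs).idxOf (xs.foldl min x))) := by
        intro k hxk hk
        apply ih k (by omega)
        simp only [List.length_take, List.length_cons] at hm ⊢
        omega
      have h2 : ∀ k, xs.length ≤ k → k ≤ n → ctAux k ((x::xs).drop ((x::xs).idxOf (xs.foldl min x) + 1))
          = ctree ((x::xs).drop ((x::xs).idxOf (xs.foldl min x) + 1)) := by
        intro k hxk hk
        apply ih k (by omega)
        simp only [List.length_drop, List.length_cons] at hm ⊢
        omega
      rw [h1 n hxn le_rfl, h2 n hxn le_rfl, h1 xs.length le_rfl hxn, h2 xs.length le_rfl hxn]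

lemma ctree_cons' (l : List α) (h : l ≠ []) :
    ctree l = .node (ctree (l.take (midx l))) (ctree (l.drop (midx l + 1))) := by
  match l with
  | x :: xs =>
    have hm := midx_lt (x :: xs) (by simp)
    simp only [midx] at hm ⊢
    conv_lhs => rw [ctree]
    show ctAux (xs.length + 1) (x :: xs) = _
    show BT.node _ _ = _
    rw [fuel xs.length _ (by simp only [List.length_take, List.length_cons] at hm ⊢; omega),
        fuel xs.length _ (by simp)]

/-- number of internal nodes -/
def bsize : BT → ℕ
  | .leaf => 0
  | .node a b => bsize a + bsize b + 1

lemma bsize_ctree_aux (n : ℕ) : ∀ l : List α, l.length ≤ n → bsize (ctree l) = l.length := by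
  induction n using Nat.strong_induction_on with
  | _ n ih =>
    intro l hl
    match l with
    | [] => rfl
    | x :: xs =>
      have hne : (x :: xs) ≠ [] := by simp
      have hm := midx_lt _ hne
      have hln : (x :: xs).length = xs.length + 1 := rfl
      rw [ctree_cons' _ hne]
      have ht : ((x::xs).take (midx (x::xs))).length = midx (x::xs) := by
        simp only [List.length_take]; omega
      have hd : ((x::xs).drop (midx (x::xs) + 1)).length
          = (x::xs).length - (midx (x::xs) + 1) := by simp
      show bsize _ + bsize _ + 1 = _
      rw [ih (midx (x::xs)) (by omega) _ (le_of_eq ht),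
          ih ((x::xs).length - (midx (x::xs) + 1)) (by omega) _ (le_of_eq hd)]
      rw [ht, hd]
      omega

lemma bsize_ctree (l : List α) : bsize (ctree l) = l.length :=
  bsize_ctree_aux l.length l le_rfl


lemma length_sub (X : List α) (i j : ℕ) :
    (sub X i j).length = min (j - i + 1) (X.length - (i - 1)) := by
  simp [sub]

lemma sub_take (X : List α) (i j m : ℕ) (h1 : 1 ≤ i) (hij : i ≤ j) (hjm : j ≤ m) :
    sub (X.take m) i j = sub X i j := by
  unfold sub
  rw [List.drop_take, List.take_take]
  congr 1
  omega

lemma sub_drop (X : List α) (d i j : ℕ) (h1 : 1 ≤ i) :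
    sub (X.drop d) i j = sub X (i + d) (j + d) := by
  unfold sub
  rw [List.drop_drop]
  congr 1
  · omega
  · congr 1
    omega

lemma getElem_sub (X : List α) (i j t : ℕ) (ht : t < (sub X i j).length) :
    (sub X i j)[t] = X[(i-1)+t]'(by rw [length_sub] at ht; omega) := by
  unfold sub at ht ⊢
  rw [List.getElem_take, List.getElem_drop]

lemma midx_sub (X : List α) (i j : ℕ) (h1 : 1 ≤ i) (hj : j ≤ X.length)
    (him : i ≤ midx X + 1) (hmj : midx X + 1 ≤ j) (hne : X ≠ []) :
    midx (sub X i j) = midx X - (i - 1) := by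
  have hmX := midx_lt X hne
  have hlen : (sub X i j).length = j - i + 1 := by rw [length_sub]; omega
  have hsne : sub X i j ≠ [] := by
    intro h; rw [h] at hlen; simp only [List.length_nil] at hlen; omega
  apply midx_unique _ hsne _ (by omega)
  · intro t ht
    rw [getElem_sub _ _ _ _ (by omega), getElem_sub _ _ _ _ ht]
    have e : (i-1) + (midx X - (i-1)) = midx X := by omega
    simp only [e]
    exact midx_le X hne _ (by rw [hlen] at ht; omega)
  · intro t ht htk
    rw [getElem_sub _ _ _ _ (by omega), getElem_sub _ _ _ _ ht]
    have e : (i-1) + (midx X - (i-1)) = midx X := by omega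
    simp only [e]
    exact midx_first X hne _ (by omega)

lemma take_sub (X : List α) (i j m : ℕ) (h1 : 1 ≤ i) (him : i ≤ m+1) (hmj : m+1 ≤ j) :
    (sub X i j).take (m - (i-1)) = sub (X.take m) i m := by
  unfold sub
  rw [List.take_take, List.drop_take, List.take_take]
  have e : (m - (i - 1)) ⊓ (j - i + 1) = (m - i + 1) ⊓ (m - (i - 1)) := by omega
  rw [e]

lemma drop_sub (X : List α) (i j m : ℕ) (h1 : 1 ≤ i) (him : i ≤ m+1) (hmj : m+1 < j) :
    (sub X i j).drop (m - (i-1) + 1) = sub (X.drop (m+1)) 1 (j-(m+1)) := by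
  unfold sub
  rw [List.drop_take, List.drop_drop]
  simp only [Nat.sub_self, List.drop_zero]
  have e1 : j - i + 1 - (m - (i - 1) + 1) = j - (m + 1) - 1 + 1 := by omega
  have e2 : i - 1 + (m - (i - 1) + 1) = m + 1 := by omega
  rw [e1, e2]

lemma main (n : ℕ) : ∀ X Y : List α, X.length ≤ n → X.length = Y.length →
    ctree X = ctree Y → ∀ i j, 1 ≤ i → i ≤ j → j ≤ X.length →
    ctree (sub X i j) = ctree (sub Y i j) := by
  induction n using Nat.strong_induction_on with
  | _ n ih =>
    intro X Y hn hlen hct i j h1 hij hj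
    have hXne : X ≠ [] := by
      intro h; subst h; simp only [List.length_nil] at hj; omega
    have hYne : Y ≠ [] := by
      intro h; rw [h, List.length_nil] at hlen; omega
    rw [ctree_cons' X hXne, ctree_cons' Y hYne] at hct
    injection hct with hL hR
    have hmX := midx_lt X hXne
    have hmY := midx_lt Y hYne
    have hmeq : midx Y = midx X := by
      have h := congrArg bsize hL
      rw [bsize_ctree, bsize_ctree] at h
      simp only [List.length_take] at h
      omega
    set m := midx X with hm
    rw [hmeq] at hL hR hmY
    by_cases hjm : j ≤ m
    · rw [← sub_take X i j m h1 hij hjm, ← sub_take Y i j m h1 hij hjm]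
      refine ih m (by omega) _ _ ?_ ?_ hL i j h1 hij ?_ <;>
        simp only [List.length_take, hlen] <;> omega
    · by_cases him : m + 1 < i
      · have e1 : sub X i j = sub (X.drop (m+1)) (i-(m+1)) (j-(m+1)) := by
          rw [sub_drop X (m+1) _ _ (by omega)]
          congr 1 <;> omega
        have e2 : sub Y i j = sub (Y.drop (m+1)) (i-(m+1)) (j-(m+1)) := by
          rw [sub_drop Y (m+1) _ _ (by omega)]
          congr 1 <;> omega
        rw [e1, e2]
        refine ih (X.length - (m+1)) (by omega) _ _ ?_ ?_ hR _ _ (by omega) (by omega) ?_ <;>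
          simp only [List.length_drop, hlen] <;> omega
      · have him' : i ≤ m + 1 := by omega
        have hmj : m + 1 ≤ j := by omega
        have hXsne : sub X i j ≠ [] := by
          have hh := length_sub X i j
          intro h; rw [h, List.length_nil] at hh; omega
        have hYsne : sub Y i j ≠ [] := by
          have hh := length_sub Y i j
          intro h; rw [h, List.length_nil] at hh; omega
        rw [ctree_cons' _ hXsne, ctree_cons' _ hYsne,
            midx_sub X i j h1 hj him' hmj hXne,
            midx_sub Y i j h1 (by omega) (by rw [hmeq]; omega) (by rw [hmeq]; omega) hYne,
            hmeq]
        congr 1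
        · rw [take_sub X i j m h1 him' hmj, take_sub Y i j m h1 him' hmj]
          by_cases hi2 : i ≤ m
          · refine ih m (by omega) _ _ ?_ ?_ hL i m h1 hi2 ?_ <;>
              simp only [List.length_take, hlen] <;> omega
          · have hXe : sub (X.take m) i m = [] := by
              apply List.eq_nil_of_length_eq_zero
              rw [length_sub]
              simp only [List.length_take]
              omega
            have hYe : sub (Y.take m) i m = [] := by
              apply List.eq_nil_of_length_eq_zero
              rw [length_sub]
              simp only [List.length_take]
              omega
            rw [hXe, hYe]
        · by_cases hj2 : m + 1 < j
          · rw [drop_sub X i j m h1 him' hj2, drop_sub Y i j m h1 him' hj2]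
            refine ih (X.length - (m+1)) (by omega) _ _ ?_ ?_ hR 1 (j-(m+1)) le_rfl
              (by omega) ?_ <;> simp only [List.length_drop, hlen] <;> omega
          · have hj3 : j = m + 1 := by omega
            have hXe : (sub X i j).drop (m - (i-1) + 1) = [] := by
              apply List.eq_nil_of_length_eq_zero
              rw [List.length_drop, length_sub]
              omega
            have hYe : (sub Y i j).drop (m - (i-1) + 1) = [] := by
              apply List.eq_nil_of_length_eq_zero
              rw [List.length_drop, length_sub]
              omega
            rw [hXe, hYe]

end CTHelp

theorem stmt9 {α : Type*} [LinearOrder α] (X Y : List α)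
    (hlen : X.length = Y.length) (hct : ctree X = ctree Y)
    (i j : ℕ) (h1 : 1 ≤ i) (hij : i ≤ j) (hj : j ≤ X.length) :
    ctree (sub X i j) = ctree (sub Y i j) :=
  CTHelp.main X.length X Y le_rfl hlen hct i j h1 hij hj
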